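/- Let f ∈ O[X] be a polynomial over the valuation ring of a valued field (K,v) and b ∈ O with s := f'(b) ≠ 0. Then f induces a pseudo-linear map with pseudo-slope s from b + sM into f(b) + s²M, where M is the valuation ideal; i.e., for all distinct y,z ∈ b+sM, v(f(y) − f(z) − s(y−z)) > vs + v(y−z). -/

import Mathlib

/-- The axioms of a (Krull) valuation on a field, written additively, with
`v a = ⊤` iff `a = 0`. -/
def IsFieldVal {K : Type*} [Field K] {Γ : Type*} [AddCommGroup Γ] [LinearOrder Γ] [IsOrderedAddMonoid Γ]
    (v : K → WithTop Γ) : Prop :=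
  (∀ a, v a = ⊤ ↔ a = 0) ∧ (∀ a b, v (a * b) = v a + v b) ∧
  (∀ a b, min (v a) (v b) ≤ v (a - b))

section Helpers
variable {K : Type*} [Field K] {Γ : Type*} [AddCommGroup Γ] [LinearOrder Γ] [IsOrderedAddMonoid Γ]
  {v : K → WithTop Γ} (hv : IsFieldVal v)

namespace FV
include hv

theorem top_iff (a : K) : v a = ⊤ ↔ a = 0 := hv.1 a
theorem mul (a b : K) : v (a * b) = v a + v b := hv.2.1 a b
theorem sub (a b : K) : min (v a) (v b) ≤ v (a - b) := hv.2.2 a b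

theorem one : v 1 = (0 : WithTop Γ) := by
  have h := hv.2.1 1 1
  rw [mul_one] at h
  have h1 : v 1 ≠ ⊤ := by simp [hv.1]
  lift v 1 to Γ using h1 with g
  have hg : g + 0 = g + g := by rw [add_zero]; exact_mod_cast h
  exact_mod_cast (add_left_cancel hg).symm

theorem neg (a : K) : v (-a) = v a := by
  have := hv.2.1 (-1) a
  rw [neg_one_mul] at this
  have h1 : v (-1 : K) = 0 := by
    have h := hv.2.1 (-1) (-1)
    rw [neg_mul_neg, one_mul, one hv] at h
    have h1 : v (-1 : K) ≠ ⊤ := by simp [hv.1]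
    lift v (-1 : K) to Γ using h1 with g
    have hg : g + g = (0:Γ) := by exact_mod_cast h.symm
    have hg0 : g = 0 := by
      rcases lt_trichotomy g 0 with h' | h' | h'
      · have := add_lt_add h' h'; rw [add_zero, hg] at this; exact absurd this (lt_irrefl 0)
      · exact h'
      · have := add_lt_add h' h'; rw [add_zero, hg] at this; exact absurd this (lt_irrefl 0)
    exact_mod_cast hg0
  rw [this, h1, zero_add]

theorem add (a b : K) : min (v a) (v b) ≤ v (a + b) := by
  have := hv.2.2 a (-b)
  rwa [neg hv, sub_neg_eq_add] at this

theorem add_eq_right {a b : K} (h : v b < v a) : v (a + b) = v b := by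
  refine le_antisymm ?_ (le_trans (by simp [le_of_lt h]) (add hv a b))
  by_contra hc
  push_neg at hc
  have : v b < v ((a+b) - a) := lt_of_lt_of_le (lt_min hc h) (sub hv _ _)
  simp at this

theorem pow_nonneg {a : K} (ha : 0 ≤ v a) (n : ℕ) : 0 ≤ v (a ^ n) := by
  induction n with
  | zero => simp [one hv]
  | succ n ih =>
    rw [pow_succ, mul hv]
    exact add_nonneg ih ha

theorem nat_nonneg (n : ℕ) : 0 ≤ v (n : K) := by
  induction n with
  | zero => simp [(hv.1 0).mpr rfl]
  | succ n ih =>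
    push_cast
    refine le_trans ?_ (add hv _ _)
    simp [ih, one hv]

theorem sum_nonneg {ι : Type*} (s : Finset ι) (g : ι → K)
    (h : ∀ i ∈ s, 0 ≤ v (g i)) : 0 ≤ v (∑ i ∈ s, g i) := by
  classical
  induction s using Finset.cons_induction with
  | empty => simp [(hv.1 0).mpr rfl]
  | cons i s hi ih =>
    rw [Finset.sum_cons]
    refine le_trans (le_min (h i (by simp)) (ih fun j hj => h j (by simp [hj]))) (add hv _ _)

theorem sum_le {ι : Type*} (s : Finset ι) (g : ι → K) (c : WithTop Γ)
    (h : ∀ i ∈ s, c ≤ v (g i)) : c ≤ v (∑ i ∈ s, g i) := by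
  classical
  induction s using Finset.cons_induction with
  | empty => simp [(hv.1 0).mpr rfl]
  | cons i s hi ih =>
    rw [Finset.sum_cons]
    exact le_trans (le_min (h i (by simp)) (ih fun j hj => h j (by simp [hj]))) (add hv _ _)

theorem eval_nonneg {g : Polynomial K} (hg : ∀ i, 0 ≤ v (g.coeff i))
    {r : K} (hr : 0 ≤ v r) : 0 ≤ v (g.eval r) := by
  rw [Polynomial.eval_eq_sum_range]
  refine sum_nonneg hv _ _ fun i _ => ?_
  rw [mul hv]
  exact add_nonneg (hg i) (pow_nonneg hv hr i)

theorem hasse_coeff {g : Polynomial K} (hg : ∀ i, 0 ≤ v (g.coeff i)) (k i : ℕ) :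
    0 ≤ v ((Polynomial.hasseDeriv k g).coeff i) := by
  rw [Polynomial.hasseDeriv_coeff, mul hv]
  exact add_nonneg (nat_nonneg hv _) (hg _)

theorem taylor_coeff_nonneg {g : Polynomial K} (hg : ∀ i, 0 ≤ v (g.coeff i))
    {r : K} (hr : 0 ≤ v r) (i : ℕ) : 0 ≤ v ((Polynomial.taylor r g).coeff i) := by
  rw [Polynomial.taylor_coeff]
  exact eval_nonneg hv (hasse_coeff hv hg i) hr

/-- First order Taylor estimate. -/
theorem taylor1 {g : Polynomial K} (hg : ∀ i, 0 ≤ v (g.coeff i))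
    {r x : K} (hr : 0 ≤ v r) (hw : 0 ≤ v (x - r)) :
    v (x - r) ≤ v (g.eval x - g.eval r) := by
  set w := x - r with hwdef
  set T := Polynomial.taylor r g with hT
  have hx : g.eval x = T.eval w := by
    rw [hT, Polynomial.taylor_eval, hwdef, sub_add_cancel]
  have hd : T.natDegree < T.natDegree + 1 := Nat.lt_succ_self _
  rw [hx, Polynomial.eval_eq_sum_range' (Nat.lt_succ_of_lt hd)]
  rw [Finset.sum_range_succ']
  have h0 : T.coeff 0 * w ^ 0 = g.eval r := by
    simp [hT, Polynomial.taylor_coeff_zero]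
  rw [h0, add_sub_cancel_right]
  refine sum_le hv _ _ _ fun i _ => ?_
  rw [mul hv, pow_succ', mul hv]
  calc v w = 0 + (v w + 0) := by simp
  _ ≤ v (T.coeff (i+1)) + (v w + v (w ^ i)) :=
      add_le_add (taylor_coeff_nonneg hv hg hr _)
        (add_le_add le_rfl (pow_nonneg hv hw i))

/-- Second order Taylor estimate. -/
theorem taylor2 {g : Polynomial K} (hg : ∀ i, 0 ≤ v (g.coeff i))
    {r x : K} (hr : 0 ≤ v r) (hw : 0 ≤ v (x - r)) :
    v (x - r) + v (x - r) ≤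
      v (g.eval x - g.eval r - (Polynomial.derivative g).eval r * (x - r)) := by
  set w := x - r with hwdef
  set T := Polynomial.taylor r g with hT
  have hx : g.eval x = T.eval w := by
    rw [hT, Polynomial.taylor_eval, hwdef, sub_add_cancel]
  have hd : T.natDegree < T.natDegree + 2 := by omega
  rw [hx, Polynomial.eval_eq_sum_range' hd]
  rw [Finset.sum_range_succ', Finset.sum_range_succ']
  have h0 : T.coeff 0 * w ^ 0 = g.eval r := by
    simp [hT, Polynomial.taylor_coeff_zero]
  have h1 : T.coeff (0+1) * w ^ (0+1) = (Polynomial.derivative g).eval r * w := by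
    simp [hT, Polynomial.taylor_coeff_one]
  rw [h0, h1, add_sub_cancel_right, add_sub_cancel_right]
  refine sum_le hv _ _ _ fun i _ => ?_
  rw [mul hv]
  have : w ^ (i + 1 + 1) = w * (w * w ^ i) := by ring
  rw [this, mul hv, mul hv]
  calc v w + v w = 0 + (v w + (v w + 0)) := by abel
  _ ≤ v (T.coeff (i+1+1)) + (v w + (v w + v (w ^ i))) := by
      refine add_le_add (taylor_coeff_nonneg hv hg hr _) ?_
      exact add_le_add le_rfl (add_le_add le_rfl (pow_nonneg hv hw i))

end FV
end Helpers

open FV in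
/-- if `f ∈ O[X]` and `b ∈ O` with `s := f'(b) ≠ 0`, then `f` induces a
pseudo-linear map with pseudo-slope `s` from `b + sM` into `f(b) + s²M`. -/
theorem polynomial_pseudoLinear {K : Type*} [Field K] {Γ : Type*}
    [AddCommGroup Γ] [LinearOrder Γ] [IsOrderedAddMonoid Γ] (v : K → WithTop Γ) (hv : IsFieldVal v)
    (f : Polynomial K) (hf : ∀ i : ℕ, 0 ≤ v (f.coeff i))
    (b : K) (hb : 0 ≤ v b)
    (hs : Polynomial.eval b (Polynomial.derivative f) ≠ 0) :
    (∀ y : K, v (Polynomial.eval b (Polynomial.derivative f)) < v (y - b) →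
      v (Polynomial.eval b (Polynomial.derivative f)) +
          v (Polynomial.eval b (Polynomial.derivative f)) <
        v (Polynomial.eval y f - Polynomial.eval b f)) ∧
    ∀ y z : K, v (Polynomial.eval b (Polynomial.derivative f)) < v (y - b) →
      v (Polynomial.eval b (Polynomial.derivative f)) < v (z - b) → y ≠ z →
        v (Polynomial.eval y f - Polynomial.eval z f) =
            v (Polynomial.eval b (Polynomial.derivative f)) + v (y - z) ∧
          v (Polynomial.eval b (Polynomial.derivative f)) + v (y - z) <
            v (Polynomial.eval y f - Polynomial.eval z f -
                Polynomial.eval b (Polynomial.derivative f) * (y - z)) := by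
  set s := Polynomial.eval b (Polynomial.derivative f) with hsdef
  have hstop : v s ≠ ⊤ := fun h => hs ((hv.1 s).mp h)
  have hdf : ∀ i, 0 ≤ v ((Polynomial.derivative f).coeff i) := by
    intro i
    rw [← Polynomial.hasseDeriv_one']
    exact hasse_coeff hv hf 1 i
  have hvs0 : 0 ≤ v s := eval_nonneg hv hdf hb
  constructor
  · intro y hy
    by_cases hyb : y = b
    · subst hyb
      rw [sub_self, (hv.1 0).mpr rfl]
      exact WithTop.add_lt_top.mpr ⟨lt_top_iff_ne_top.mpr hstop, lt_top_iff_ne_top.mpr hstop⟩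
    · have hw0 : 0 ≤ v (y - b) := le_of_lt (lt_of_le_of_lt hvs0 hy)
      have key := taylor2 hv hf hb hw0
      have h1 : v s + v s < v (y - b) + v (y - b) :=
        lt_of_lt_of_le (WithTop.add_lt_add_left hstop hy)
          (add_le_add_left (le_of_lt hy) (v (y - b)))
      have h2 : v s + v s < v (s * (y - b)) := by
        rw [mul hv]
        exact WithTop.add_lt_add_left hstop hy
      have hsplit : Polynomial.eval y f - Polynomial.eval b f =
          (Polynomial.eval y f - Polynomial.eval b f - s * (y - b)) + s * (y - b) := by ring
      rw [hsplit]
      exact lt_of_lt_of_le (lt_min (lt_of_lt_of_le h1 key) h2) (add hv _ _)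
  · intro y z hy hz hyz
    have hδ0 : y - z ≠ 0 := sub_ne_zero.mpr hyz
    have hδtop : v (y - z) ≠ ⊤ := fun h => hδ0 ((hv.1 _).mp h)
    have hδ : v s < v (y - z) := by
      have h := hv.2.2 (y - b) (z - b)
      rw [sub_sub_sub_cancel_right] at h
      exact lt_of_lt_of_le (lt_min hy hz) h
    have hδnn : 0 ≤ v (y - z) := le_of_lt (lt_of_le_of_lt hvs0 hδ)
    have hz0 : 0 ≤ v z := by
      have h := le_trans (le_min hb (le_of_lt (lt_of_le_of_lt hvs0 hz))) (add hv b (z - b))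
      rwa [show b + (z - b) = z by ring] at h
    have hE1 := taylor2 hv hf hz0 hδnn
    have hE2 : v (z - b) ≤ v ((Polynomial.derivative f).eval z - s) :=
      taylor1 hv hdf hb (le_of_lt (lt_of_le_of_lt hvs0 hz))
    have hkey : v s + v (y - z) <
        v (Polynomial.eval y f - Polynomial.eval z f - s * (y - z)) := by
      have hsplit : Polynomial.eval y f - Polynomial.eval z f - s * (y - z) =
          (Polynomial.eval y f - Polynomial.eval z f
            - (Polynomial.derivative f).eval z * (y - z))
          + ((Polynomial.derivative f).eval z - s) * (y - z) := by ring
      rw [hsplit]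
      refine lt_of_lt_of_le (lt_min ?_ ?_) (add hv _ _)
      · exact lt_of_lt_of_le (WithTop.add_lt_add_right hδtop hδ) hE1
      · rw [mul hv]
        exact WithTop.add_lt_add_right hδtop (lt_of_lt_of_le hz hE2)
    refine ⟨?_, hkey⟩
    have hsplit2 : Polynomial.eval y f - Polynomial.eval z f =
        (Polynomial.eval y f - Polynomial.eval z f - s * (y - z)) + s * (y - z) := by ring
    rw [hsplit2, add_eq_right hv (by rw [mul hv]; exact hkey), mul hv]
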